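/- Fix ω > 0 and z₀ ∈ ℂ, and let G(z) := (ω/(4π)) · ((conj z − conj z₀)/(z − z₀)) · (1 + z₀·conj z)² / ((1+|z|²)(1+|z₀|²)) for z ≠ z₀. Then the function z ↦ |G(z)|² · 4(1+|z|²)^{-2} is Lebesgue-integrable on ℂ. (This is the paper's claim that the memory which arises in gravitational scattering, although not smooth, is square-integrable on the 2-sphere, so that the radiation field has finite energy; 4(1+|z|²)^{-2} is the density of the round sphere measure in stereographic coordinates.) -/

import Mathlib

noncomputable section

/-- The paper's gravitational memory Green's function (4.10):
`G(z) = (ω/4π) ((z̄ − z̄₀)/(z − z₀)) (1 + z₀ z̄)² / ((1+|z|²)(1+|z₀|²))`. -/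
def memG (ω : ℝ) (z₀ z : ℂ) : ℂ :=
  ((ω / (4 * Real.pi) : ℝ) : ℂ) *
    (((starRingEnd ℂ) z - (starRingEnd ℂ) z₀) / (z - z₀)) *
    (1 + z₀ * (starRingEnd ℂ) z) ^ 2 /
    (((1 + ‖z‖ ^ 2 : ℝ) : ℂ) * ((1 + ‖z₀‖ ^ 2 : ℝ) : ℂ))

lemma abs_memG_le (ω : ℝ) (hω : 0 < ω) (z₀ z : ℂ) :
    ‖memG ω z₀ z‖ ≤ ω / (4 * Real.pi) := by
  have hπ : 0 < Real.pi := Real.pi_pos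
  set c : ℝ := ω / (4 * Real.pi) with hc
  have hc0 : 0 ≤ c := by positivity
  have hR : ‖((starRingEnd ℂ) z - (starRingEnd ℂ) z₀) / (z - z₀)‖ ≤ 1 := by
    rcases eq_or_ne z z₀ with h | h
    · simp [h]
    · rw [norm_div, ← map_sub (starRingEnd ℂ), Complex.norm_conj,
        div_self (norm_ne_zero_iff.mpr (sub_ne_zero.mpr h))]
  have hS : ‖(1 + z₀ * (starRingEnd ℂ) z) ^ 2‖
      ≤ (1 + ‖z‖ ^ 2) * (1 + ‖z₀‖ ^ 2) := by
    have h1 : ‖1 + z₀ * (starRingEnd ℂ) z‖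
        ≤ 1 + ‖z₀‖ * ‖z‖ := by
      calc ‖1 + z₀ * (starRingEnd ℂ) z‖
          ≤ ‖1‖ + ‖z₀ * (starRingEnd ℂ) z‖ := norm_add_le _ _
        _ = 1 + ‖z₀‖ * ‖z‖ := by
            simp [norm_mul, Complex.norm_conj]
    rw [norm_pow]
    have h0 : 0 ≤ ‖1 + z₀ * (starRingEnd ℂ) z‖ := norm_nonneg _
    nlinarith [sq_nonneg (‖z‖ - ‖z₀‖), norm_nonneg z,
      norm_nonneg z₀]
  unfold memG
  rw [norm_div, norm_mul, norm_mul]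
  have hA : (0:ℝ) < 1 + ‖z‖ ^ 2 := by positivity
  have hB : (0:ℝ) < 1 + ‖z₀‖ ^ 2 := by positivity
  rw [norm_mul]
  simp only [Complex.norm_real, Real.norm_eq_abs, abs_of_pos hA, abs_of_pos hB]
  rw [div_le_iff₀ (by positivity)]
  have hcc : |(ω / (4 * Real.pi) : ℝ)| = c := abs_of_nonneg hc0
  rw [hcc]
  have hS0 : 0 ≤ ‖(1 + z₀ * (starRingEnd ℂ) z) ^ 2‖ := norm_nonneg _
  have hR0 : 0 ≤ ‖((starRingEnd ℂ) z - (starRingEnd ℂ) z₀) / (z - z₀)‖ :=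
    norm_nonneg _
  calc c * ‖((starRingEnd ℂ) z - (starRingEnd ℂ) z₀) / (z - z₀)‖ *
        ‖(1 + z₀ * (starRingEnd ℂ) z) ^ 2‖
      ≤ c * 1 * ((1 + ‖z‖ ^ 2) * (1 + ‖z₀‖ ^ 2)) := by
        apply mul_le_mul _ hS hS0 (by positivity)
        exact mul_le_mul_of_nonneg_left hR hc0
    _ = c * ((1 + ‖z‖ ^ 2) * (1 + ‖z₀‖ ^ 2)) := by ring

/-- The gravitational memory which arises in scattering is square-integrable on
the 2-sphere: `z ↦ |G(z)|² · 4(1+|z|²)⁻²` is Lebesgue-integrable on `ℂ`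
(`4(1+|z|²)⁻²` being the density of the round sphere measure in stereographic
coordinates), so the radiation field has finite energy. -/
theorem memG_square_integrable (ω : ℝ) (hω : 0 < ω) (z₀ : ℂ) :
    MeasureTheory.Integrable
      (fun z : ℂ => ‖memG ω z₀ z‖ ^ 2 * (4 * ((1 + ‖z‖ ^ 2) ^ 2)⁻¹)) := by
  have hπ : 0 < Real.pi := Real.pi_pos
  set c : ℝ := ω / (4 * Real.pi) with hc
  have hc0 : 0 ≤ c := by positivity
  have h4 : MeasureTheory.Integrable
      (fun z : ℂ => ((1:ℝ) + ‖z‖ ^ 2) ^ ((-4:ℝ) / 2)) :=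
    integrable_rpow_neg_one_add_norm_sq (E := ℂ) (r := 4)
      (by rw [Complex.finrank_real_complex]; norm_num)
  have key : ∀ n : ℝ, ((1:ℝ) + n ^ 2) ^ ((-4:ℝ) / 2) = (((1:ℝ) + n ^ 2) ^ 2)⁻¹ := by
    intro n
    rw [show ((-4:ℝ)/2) = -(((2:ℕ):ℝ)) by norm_num, Real.rpow_neg (by positivity),
      Real.rpow_natCast]
  refine (h4.const_mul (4 * c ^ 2)).mono' ?_ ?_
  · have hconj : Measurable fun z : ℂ => (starRingEnd ℂ) z :=
      Complex.continuous_conj.measurable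
    have habs : Measurable (fun z : ℂ => ‖z‖) := continuous_norm.measurable
    have hm : Measurable fun z => memG ω z₀ z := by
      unfold memG
      refine Measurable.div ?_ ?_
      · exact ((measurable_const.mul ((hconj.sub measurable_const).div
          (measurable_id.sub measurable_const))).mul
          ((measurable_const.add (measurable_const.mul hconj)).pow_const 2))
      · exact ((Complex.measurable_ofReal.comp
          (measurable_const.add (habs.pow_const 2))).mul measurable_const)
    have hden : Continuous fun z : ℂ => (1 + ‖z‖ ^ 2) ^ 2 :=
      (continuous_const.add (continuous_norm.pow 2)).pow 2
    have h2m : Continuous fun z : ℂ => 4 * ((1 + ‖z‖ ^ 2) ^ 2)⁻¹ :=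
      continuous_const.mul (hden.inv₀ (fun z => by positivity))
    exact (((habs.comp hm).pow_const 2).mul h2m.measurable).aestronglyMeasurable
  · filter_upwards with z
    have hz : ‖z‖ = ‖z‖ := rfl
    rw [Real.norm_eq_abs, abs_of_nonneg (by positivity), key ‖z‖]
    have hG := abs_memG_le ω hω z₀ z
    have hG0 : 0 ≤ ‖memG ω z₀ z‖ := norm_nonneg _
    have hg2 : ‖memG ω z₀ z‖ ^ 2 ≤ c ^ 2 := by nlinarith
    have hinv : (0:ℝ) ≤ (((1:ℝ) + ‖z‖ ^ 2) ^ 2)⁻¹ := by positivity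
    calc ‖memG ω z₀ z‖ ^ 2 * (4 * ((1 + ‖z‖ ^ 2) ^ 2)⁻¹)
        ≤ c ^ 2 * (4 * ((1 + ‖z‖ ^ 2) ^ 2)⁻¹) := by
          rw [hz]
          exact mul_le_mul_of_nonneg_right hg2 (by positivity)
      _ = 4 * c ^ 2 * ((1 + ‖z‖ ^ 2) ^ 2)⁻¹ := by ring

end
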